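/- For nonnegative integers n,k and any 1 ≤ i ≤ n-k, the number of partial permutations in P(n,k) with exactly i excedances equals the number of partial permutations in P(n,k) with exactly n-k-i weak excedances. -/

import Mathlib

namespace PP

def isPP {n : ℕ} (M : Fin n → Fin n → Bool) : Prop :=
  (∀ i j j', M i j = true → M i j' = true → j = j') ∧
  (∀ i i' j, M i j = true → M i' j = true → i = i')

def zeroRows {n : ℕ} (M : Fin n → Fin n → Bool) : ℕ :=
  (Finset.univ.filter (fun i : Fin n => ∀ j, M i j = false)).card

def invStat {n : ℕ} (M : Fin n → Fin n → Bool) : ℕ :=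
  (Finset.univ.filter (fun p : Fin n × Fin n =>
    M p.1 p.2 = false ∧ (∀ j' < p.2, M p.1 j' = false) ∧ (∀ i' < p.1, M i' p.2 = false) ∧
    ((∃ j', M p.1 j' = true) ∨ (∃ i', M i' p.2 = true)))).card

def rlminStat {n : ℕ} (M : Fin n → Fin n → Bool) : ℕ :=
  (Finset.univ.filter (fun p : Fin n × Fin n =>
    M p.1 p.2 = true ∧ ∀ l < p.2, ∃ i' < p.1, M i' l = true)).card

def excStat {n : ℕ} (M : Fin n → Fin n → Bool) : ℕ :=
  (Finset.univ.filter (fun p : Fin n × Fin n => M p.1 p.2 = true ∧ p.1 < p.2)).card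

def wexStat {n : ℕ} (M : Fin n → Fin n → Bool) : ℕ :=
  (Finset.univ.filter (fun p : Fin n × Fin n => M p.1 p.2 = true ∧ p.1 ≤ p.2)).card

def reachN {n : ℕ} (M : Fin n → Fin n → Bool) : ℕ → Fin n → Fin n → Prop
  | 0, i, j => i = j
  | m+1, i, j => ∃ l, M i l = true ∧ reachN M m l j

noncomputable def cycStat {n : ℕ} (M : Fin n → Fin n → Bool) : ℕ :=
  Nat.card {i : Fin n // (∃ m, 0 < m ∧ reachN M m i i) ∧ ∀ j, (∃ m, reachN M m i j) → j ≤ i}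

def fixStat {n : ℕ} (M : Fin n → Fin n → Bool) : ℕ :=
  (Finset.univ.filter (fun i : Fin n => M i i = true)).card

noncomputable def cycGe2Stat {n : ℕ} (M : Fin n → Fin n → Bool) : ℕ :=
  Nat.card {i : Fin n // (∃ m, 0 < m ∧ reachN M m i i) ∧ (∀ j, (∃ m, reachN M m i j) → j ≤ i) ∧ M i i = false}

def Conn {n : ℕ} (M : Fin n → Fin n → Bool) : Prop :=
  ∀ i : ℕ, 0 < i → i < n → ∃ r : Fin n, r.1 < i ∧ ∀ c : Fin n, c.1 < i → M r c = false

def UpDownFrom {n : ℕ} (M : Fin n → Fin n → Bool) (i : Fin n) : Prop :=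
  ∀ (m : ℕ) (a b : Fin n),
    (∀ m', 1 ≤ m' → m' ≤ m + 1 → ¬ reachN M m' i i) →
    reachN M m i a → M a b = true →
    ((Even m → a < b) ∧ (¬ Even m → b < a))

def CUD {n : ℕ} (M : Fin n → Fin n → Bool) : Prop :=
  (∀ i : Fin n,
      ((∃ m, 0 < m ∧ reachN M m i i) ∧ ∀ j, (∃ m, reachN M m i j) → i ≤ j) →
      UpDownFrom M i) ∧
  (∀ i : Fin n, (∀ i', M i' i = false) → UpDownFrom M i)

def desStat {n : ℕ} (M : Fin n → Fin n → Bool) : ℕ :=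
  (Finset.univ.filter (fun p : Fin n × Fin n =>
      M p.1 p.2 = true ∧ ∃ h : p.1.1 + 1 < n, ∃ b : Fin n, M ⟨p.1.1 + 1, h⟩ b = true ∧ b < p.2)).card
  + (Finset.univ.filter (fun p : Fin n =>
      (∀ j, M p j = false) ∧ ∃ _h : 0 < p.1, ∃ a j : Fin n,
        M ⟨p.1 - 1, Nat.lt_of_le_of_lt (Nat.sub_le _ _) p.isLt⟩ a = true ∧
        (∀ i, M i j = false) ∧
        (Finset.univ.filter (fun m : Fin n => (∀ i, M i m = false) ∧ m < j)).card
          = (Finset.univ.filter (fun r : Fin n => (∀ c, M r c = false) ∧ r < p)).card ∧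
        j < a)).card

def gbinom {R : Type*} [CommRing R] (q : R) : ℕ → ℕ → R
  | _, 0 => 1
  | 0, _+1 => 0
  | n+1, k+1 => gbinom q n k + q ^ (k+1) * gbinom q n (k+1)

def rot {n : ℕ} (M : Fin n → Fin n → Bool) : Fin n → Fin n → Bool :=
  fun i j => M i.rev j.rev

lemma rot_rot {n : ℕ} (M : Fin n → Fin n → Bool) : rot (rot M) = M := by
  funext i j; simp [rot, Fin.rev_rev]

lemma isPP_rot {n : ℕ} {M : Fin n → Fin n → Bool} (h : isPP M) : isPP (rot M) := by
  obtain ⟨h1, h2⟩ := h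
  exact ⟨fun i j j' hj hj' => Fin.rev_injective (h1 _ _ _ hj hj'),
    fun i i' j hi hi' => Fin.rev_injective (h2 _ _ _ hi hi')⟩

lemma zeroRows_rot {n : ℕ} (M : Fin n → Fin n → Bool) : zeroRows (rot M) = zeroRows M := by
  unfold zeroRows
  refine Finset.card_bij' (fun i _ => i.rev) (fun i _ => i.rev) ?_ ?_
    (fun a _ => a.rev_rev) (fun a _ => a.rev_rev)
  · intro a ha
    simp only [Finset.mem_filter, Finset.mem_univ, true_and] at ha ⊢
    intro j
    have := ha j.rev
    simpa [rot, Fin.rev_rev] using this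
  · intro a ha
    simp only [Finset.mem_filter, Finset.mem_univ, true_and] at ha ⊢
    intro j
    have := ha j.rev
    simpa [rot, Fin.rev_rev] using this

lemma supp_card {n : ℕ} {M : Fin n → Fin n → Bool} (h : isPP M) :
    (Finset.univ.filter (fun p : Fin n × Fin n => M p.1 p.2 = true)).card
      = n - zeroRows M := by
  have hsplit := Finset.card_filter_add_card_filter_not
    (s := (Finset.univ : Finset (Fin n))) (p := fun i => ∀ j, M i j = false)
  have hcompl : (Finset.univ.filter (fun i : Fin n => ¬ ∀ j, M i j = false)).card
      = n - zeroRows M := by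
    have : zeroRows M + (Finset.univ.filter (fun i : Fin n => ¬ ∀ j, M i j = false)).card
        = n := by simpa [zeroRows] using hsplit
    omega
  rw [← hcompl]
  apply Finset.card_bij (fun p _ => p.1)
  · intro p hp
    simp only [Finset.mem_filter, Finset.mem_univ, true_and] at hp ⊢
    push_neg
    exact ⟨p.2, by simp [hp]⟩
  · intro p hp q hq hpq
    simp only [Finset.mem_filter, Finset.mem_univ, true_and] at hp hq
    have : p.2 = q.2 := h.1 p.1 p.2 q.2 hp (by rw [hpq]; exact hq)
    exact Prod.ext hpq this
  · intro i hi
    simp only [Finset.mem_filter, Finset.mem_univ, true_and] at hi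
    push_neg at hi
    obtain ⟨j, hj⟩ := hi
    refine ⟨(i, j), ?_, rfl⟩
    simp only [Bool.not_eq_false] at hj
    simp [hj]

lemma excStat_rot {n : ℕ} (M : Fin n → Fin n → Bool) :
    excStat (rot M)
      = (Finset.univ.filter (fun p : Fin n × Fin n => M p.1 p.2 = true ∧ p.2 < p.1)).card := by
  unfold excStat
  refine Finset.card_bij' (fun p _ => (p.1.rev, p.2.rev)) (fun p _ => (p.1.rev, p.2.rev)) ?_ ?_
    (fun p _ => by simp [Fin.rev_rev]) (fun p _ => by simp [Fin.rev_rev])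
  · intro p hp
    simp only [Finset.mem_filter, Finset.mem_univ, true_and] at hp ⊢
    exact ⟨hp.1, by simpa [Fin.rev_lt_rev] using hp.2⟩
  · intro p hp
    simp only [Finset.mem_filter, Finset.mem_univ, true_and] at hp ⊢
    simp only [rot, Fin.rev_rev] at hp ⊢
    exact ⟨hp.1, by simpa [Fin.rev_lt_rev] using hp.2⟩

lemma exc_rot_add_wex {n : ℕ} (M : Fin n → Fin n → Bool) :
    excStat (rot M) + wexStat M
      = (Finset.univ.filter (fun p : Fin n × Fin n => M p.1 p.2 = true)).card := by
  rw [excStat_rot]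
  unfold wexStat
  have h1 : (Finset.univ.filter (fun p : Fin n × Fin n => M p.1 p.2 = true ∧ p.2 < p.1))
      = (Finset.univ.filter (fun p : Fin n × Fin n => M p.1 p.2 = true)).filter
        (fun p => p.2 < p.1) := by
    rw [Finset.filter_filter]
  have h2 : (Finset.univ.filter (fun p : Fin n × Fin n => M p.1 p.2 = true ∧ p.1 ≤ p.2))
      = (Finset.univ.filter (fun p : Fin n × Fin n => M p.1 p.2 = true)).filter
        (fun p => ¬ p.2 < p.1) := by
    rw [Finset.filter_filter]
    congr 1
    funext p
    simp [not_lt]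
  rw [h1, h2]
  exact Finset.card_filter_add_card_filter_not _

lemma wex_rot {n : ℕ} {M : Fin n → Fin n → Bool} (h : isPP M) {k : ℕ}
    (hz : zeroRows M = k) :
    excStat M + wexStat (rot M) = n - k := by
  have := exc_rot_add_wex (rot M)
  rw [rot_rot, supp_card (isPP_rot h), zeroRows_rot, hz] at this
  exact this

end PP


theorem stmt5 (n k i : ℕ) (h1 : 1 ≤ i) (h2 : i ≤ n - k) :
    Nat.card {M : Fin n → Fin n → Bool // PP.isPP M ∧ PP.zeroRows M = k ∧ PP.excStat M = i}
    = Nat.card {M : Fin n → Fin n → Bool //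
        PP.isPP M ∧ PP.zeroRows M = k ∧ PP.wexStat M = n - k - i} := by
  apply Nat.card_congr
  refine ⟨fun M => ⟨PP.rot M.1, ?_⟩, fun M => ⟨PP.rot M.1, ?_⟩, ?_, ?_⟩
  · obtain ⟨M, hPP, hz, he⟩ := M
    refine ⟨PP.isPP_rot hPP, by rw [PP.zeroRows_rot]; exact hz, ?_⟩
    show PP.wexStat (PP.rot M) = n - k - i
    have := PP.wex_rot hPP hz
    omega
  · obtain ⟨M, hPP, hz, hw⟩ := M
    refine ⟨PP.isPP_rot hPP, by rw [PP.zeroRows_rot]; exact hz, ?_⟩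
    show PP.excStat (PP.rot M) = i
    have h3 := PP.wex_rot (PP.isPP_rot hPP)
      (k := k) (by rw [PP.zeroRows_rot]; exact hz)
    rw [PP.rot_rot] at h3
    omega
  · intro M
    apply Subtype.ext
    exact PP.rot_rot M.1
  · intro M
    apply Subtype.ext
    exact PP.rot_rot M.1
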